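/- arXiv:2305.00500 — 3 statements merged into one kernel-verified Lean document; each statement's English description precedes it below -/
import Mathlib

section
/- Let H be a Hilbert space over 𝕂 = ℝ or ℂ and let A ⊆ H × H be a dissipative relation. If the orthogonal complement of ran(1 − A) in H is not {0}, then there exists a dissipative relation B ⊆ H × H with A ⊆ B and A ≠ B. Moreover, if A is an operator (i.e. mul A = {0}), then B can be chosen to be an operator. -/
open Filter Topology RCLike ComplexConjugate

/-- A relation `A ⊆ H × H` is dissipative if `‖lx‖ ≤ ‖lx - y‖` for all `(x,y) ∈ A`
and all real `l > 0`. -/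
def Dissipative {𝕜 H : Type*} [RCLike 𝕜] [NormedAddCommGroup H] [InnerProductSpace 𝕜 H]
    (A : Submodule 𝕜 (H × H)) : Prop :=
  ∀ p ∈ A, ∀ l : ℝ, 0 < l → ‖(l : 𝕜) • p.1‖ ≤ ‖(l : 𝕜) • p.1 - p.2‖

local notation "⟪" x ", " y "⟫" => @inner _ _ _ x y

section helpers
variable {𝕜 H : Type*} [RCLike 𝕜] [NormedAddCommGroup H] [InnerProductSpace 𝕜 H]

lemma sq_expand (x y : H) (l : ℝ) :
    ‖(l : 𝕜) • x - y‖ ^ 2 = ‖(l : 𝕜) • x‖ ^ 2 - 2 * (l * re (⟪x, y⟫ : 𝕜)) + ‖y‖ ^ 2 := by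
  rw [@norm_sub_sq 𝕜, inner_smul_left]
  simp [RCLike.conj_ofReal]

lemma diss_of_re {A : Submodule 𝕜 (H × H)}
    (h : ∀ p ∈ A, re (⟪p.1, p.2⟫ : 𝕜) ≤ 0) : Dissipative A := by
  intro p hp l hl
  have h2 : ‖(l : 𝕜) • p.1‖ ^ 2 ≤ ‖(l : 𝕜) • p.1 - p.2‖ ^ 2 := by
    rw [sq_expand]
    nlinarith [h p hp, sq_nonneg ‖p.2‖, norm_nonneg p.2]
  exact (pow_le_pow_iff_left₀ (norm_nonneg _) (norm_nonneg _) two_ne_zero).mp h2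

lemma re_of_diss {A : Submodule 𝕜 (H × H)} (h : Dissipative A)
    (p : H × H) (hp : p ∈ A) : re (⟪p.1, p.2⟫ : 𝕜) ≤ 0 := by
  by_contra hr
  push_neg at hr
  set r := re (⟪p.1, p.2⟫ : 𝕜)
  have key : ∀ l : ℝ, 0 < l → 2 * (l * r) ≤ ‖p.2‖ ^ 2 := by
    intro l hl
    have h1 := h p hp l hl
    have h2 : ‖(l : 𝕜) • p.1‖ ^ 2 ≤ ‖(l : 𝕜) • p.1 - p.2‖ ^ 2 := by
      exact pow_le_pow_left₀ (norm_nonneg _) h1 2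
    rw [sq_expand] at h2
    linarith
  have hl : (0:ℝ) < (‖p.2‖ ^ 2 + 1) / (2 * r) := by positivity
  have := key _ hl
  rw [mul_comm] at this
  rw [div_mul_eq_mul_div, mul_comm] at this
  have h3 : (‖p.2‖ ^ 2 + 1) * r / (2 * r) = (‖p.2‖ ^ 2 + 1) / 2 := by
    field_simp
  rw [h3] at this
  linarith
end helpers


/-- If `A` is a dissipative relation on a Hilbert space `H` and the orthogonal complement
of `ran(1 - A) = {x - y : (x,y) ∈ A}` is not `{0}`, then `A` has a proper dissipative
extension `B`; moreover if `A` is an operator then `B` can be chosen to be an operator. -/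
theorem stmt_13 {𝕜 H : Type*} [RCLike 𝕜] [NormedAddCommGroup H] [InnerProductSpace 𝕜 H]
    [CompleteSpace H] (A : Submodule 𝕜 (H × H))
    (hdiss : Dissipative A)
    (hperp : ∃ v : H, v ≠ 0 ∧ ∀ p ∈ A, (inner 𝕜 (p.1 - p.2) v : 𝕜) = 0) :
    ∃ B : Submodule 𝕜 (H × H), Dissipative B ∧ A < B ∧
      ((∀ y : H, ((0 : H), y) ∈ A → y = 0) → ∀ y : H, ((0 : H), y) ∈ B → y = 0) := by
  obtain ⟨v, hv0, hv⟩ := hperp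
  set w : H × H := (v, -v) with hw
  refine ⟨A ⊔ (𝕜 ∙ w), ?_, ?_, ?_⟩
  · -- dissipative
    apply diss_of_re
    intro p hp
    rw [Submodule.mem_sup] at hp
    obtain ⟨q, hq, s, hs, rfl⟩ := hp
    rw [Submodule.mem_span_singleton] at hs
    obtain ⟨c, rfl⟩ := hs
    have hperpq := hv q hq
    have hqv : (⟪q.1, v⟫ : 𝕜) = ⟪q.2, v⟫ := by
      rw [inner_sub_left] at hperpq
      linear_combination hperpq
    have hre := re_of_diss hdiss q hq
    have e1 : ((q + c • w).1 : H) = q.1 + c • v := rfl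
    have e2 : ((q + c • w).2 : H) = q.2 - c • v := by
      show q.2 + c • (-v) = q.2 - c • v
      rw [smul_neg]; abel
    rw [e1, e2]
    have expand : (⟪q.1 + c • v, q.2 - c • v⟫ : 𝕜)
        = ⟪q.1, q.2⟫ + ((conj (c * ⟪q.1, v⟫)) - c * ⟪q.1, v⟫) - ⟪c • v, c • v⟫ := by
      rw [inner_sub_right, inner_add_left, inner_add_left, inner_smul_left,
        inner_smul_right, hqv, ← inner_conj_symm q.2 v, map_mul, RCLike.conj_conj]
      ring
    have hcc : re (⟪c • v, c • v⟫ : 𝕜) = ‖c • v‖ ^ 2 := by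
      rw [← inner_self_eq_norm_sq (𝕜 := 𝕜)]
    have hre2 : re (⟪q.1 + c • v, q.2 - c • v⟫ : 𝕜)
        = re (⟪q.1, q.2⟫ : 𝕜) - ‖c • v‖ ^ 2 := by
      rw [expand, map_sub, map_add, map_sub, RCLike.conj_re, hcc]
      ring
    rw [hre2]
    nlinarith [sq_nonneg ‖c • v‖]
  · -- strict
    refine lt_of_le_of_ne le_sup_left ?_
    intro hAB
    have hwB : w ∈ A ⊔ (𝕜 ∙ w) :=
      Submodule.mem_sup_right (Submodule.mem_span_singleton_self w)
    rw [← hAB] at hwB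
    have := hv w hwB
    simp only [hw] at this
    rw [sub_neg_eq_add, inner_add_left] at this
    have h2 : (2 : 𝕜) * ⟪v, v⟫ = 0 := by linear_combination this
    have hvv : (⟪v, v⟫ : 𝕜) = 0 := by
      rcases mul_eq_zero.mp h2 with h | h
      · exact absurd h two_ne_zero
      · exact h
    exact hv0 (inner_self_eq_zero.mp hvv)
  · -- operator
    intro hA y hy
    rw [Submodule.mem_sup] at hy
    obtain ⟨q, hq, s, hs, hsum⟩ := hy
    rw [Submodule.mem_span_singleton] at hs
    obtain ⟨c, rfl⟩ := hs
    have h1 : q.1 = -(c • v) := by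
      have h := congrArg Prod.fst hsum
      simp only [Prod.fst_add, hw] at h
      exact eq_neg_of_add_eq_zero_left h
    have h2 : q.2 = y + c • v := by
      have h := congrArg Prod.snd hsum
      simp only [Prod.snd_add, Prod.smul_snd, smul_neg, hw] at h
      rw [← h]; abel
    have hpq := hv q hq
    rw [h1, h2, inner_sub_left, inner_add_left, inner_neg_left, inner_smul_left] at hpq
    have hyv : (⟪y, v⟫ : 𝕜) = -(2 * conj c * ⟪v, v⟫) := by linear_combination -hpq
    have hvy : (⟪v, y⟫ : 𝕜) = -(2 * c * ⟪v, v⟫) := by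
      have h := congrArg (starRingEnd 𝕜) hyv
      rw [inner_conj_symm, map_neg, map_mul, map_mul, RCLike.conj_conj,
        inner_conj_symm, map_ofNat] at h
      exact h
    have hinner : (⟪q.1, q.2⟫ : 𝕜) = ((‖c‖ : 𝕜)) ^ 2 * ⟪v, v⟫ := by
      rw [h1, h2]
      simp only [inner_neg_left, inner_add_right, inner_smul_left, inner_smul_right]
      rw [hvy, ← RCLike.conj_mul]
      ring
    have hre := re_of_diss hdiss q hq
    rw [hinner, ← RCLike.ofReal_pow, RCLike.re_ofReal_mul] at hre
    have hvvre : re (⟪v, v⟫ : 𝕜) = ‖v‖ ^ 2 := by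
      rw [← inner_self_eq_norm_sq (𝕜 := 𝕜)]
    rw [hvvre] at hre
    have hc : c = 0 := by
      have hvpos : 0 < ‖v‖ ^ 2 := by
        have : ‖v‖ ≠ 0 := norm_ne_zero_iff.mpr hv0
        positivity
      have h5 : ‖c‖ ^ 2 ≤ 0 := by
        by_contra hcon
        push_neg at hcon
        nlinarith
      have h6 : ‖c‖ ^ 2 = 0 := le_antisymm h5 (sq_nonneg _)
      exact norm_eq_zero.mp ((pow_eq_zero_iff two_ne_zero).mp h6)
    rw [hc, zero_smul, add_zero] at hsum
    rw [hc, zero_smul] at h2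
    rw [add_zero] at h2
    have hq0 : ((0 : H), y) ∈ A := by
      have hq1 : q.1 = 0 := by rw [hc, zero_smul, neg_zero] at h1; exact h1
      have : q = ((0 : H), y) := Prod.ext hq1 h2
      rwa [this] at hq
    exact hA y hq0
end

section
/- Let H be a Hilbert space over 𝕂 = ℝ or ℂ. A relation A ⊆ H × H is m-dissipative if and only if A is maximal dissipative, i.e. A is dissipative and whenever B ⊆ H × H is a dissipative relation with A ⊆ B, then A = B. -/
open Filter Topology
open RCLike

section aux

variable {𝕜 H : Type*} [RCLike 𝕜] [NormedAddCommGroup H] [InnerProductSpace 𝕜 H]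

local notation "⟪" x ", " y "⟫" => @inner 𝕜 _ _ x y

lemma key_aux (x y : H) :
    (∀ l : ℝ, 0 < l → ‖(l : 𝕜) • x‖ ≤ ‖(l : 𝕜) • x - y‖) ↔ re ⟪x, y⟫ ≤ 0 := by
  have expand : ∀ l : ℝ, ‖(l : 𝕜) • x - y‖ ^ 2
      = ‖(l : 𝕜) • x‖ ^ 2 - 2 * (l * re ⟪x, y⟫) + ‖y‖ ^ 2 := by
    intro l
    rw [norm_sub_sq (𝕜 := 𝕜), inner_smul_left, conj_ofReal, re_ofReal_mul]
  constructor
  · intro h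
    by_contra hc
    push_neg at hc
    set r := re ⟪x, y⟫
    set l := (‖y‖ ^ 2 + 1) / (2 * r) with hld
    have hl : 0 < l := by positivity
    have h2 : ‖(l : 𝕜) • x‖ ^ 2 ≤ ‖(l : 𝕜) • x - y‖ ^ 2 :=
      pow_le_pow_left₀ (norm_nonneg _) (h l hl) 2
    rw [expand] at h2
    have : 2 * (l * r) = ‖y‖ ^ 2 + 1 := by
      rw [hld]; field_simp [hc.ne']
    nlinarith
  · intro h l hl
    have h2 : ‖(l : 𝕜) • x‖ ^ 2 ≤ ‖(l : 𝕜) • x - y‖ ^ 2 := by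
      rw [expand]; nlinarith
    exact (pow_le_pow_iff_left₀ (norm_nonneg _) (norm_nonneg _) two_ne_zero).mp h2

lemma diss_iff (A : Submodule 𝕜 (H × H)) :
    Dissipative A ↔ ∀ p ∈ A, re ⟪p.1, p.2⟫ ≤ 0 := by
  constructor
  · intro h p hp
    exact (key_aux p.1 p.2).mp (fun l hl => h p hp l hl)
  · intro h p hp l hl
    exact (key_aux p.1 p.2).mpr (h p hp) l hl

lemma diss_closure {A : Submodule 𝕜 (H × H)} (h : Dissipative A) :
    Dissipative A.topologicalClosure := by
  intro p hp l hl
  have hS : IsClosed {q : H × H | ‖(l : 𝕜) • q.1‖ ≤ ‖(l : 𝕜) • q.1 - q.2‖} := by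
    apply isClosed_le
    · exact (continuous_const.smul continuous_fst).norm
    · exact ((continuous_const.smul continuous_fst).sub continuous_snd).norm
  have hsub : (A : Set (H × H)) ⊆ {q : H × H | ‖(l : 𝕜) • q.1‖ ≤ ‖(l : 𝕜) • q.1 - q.2‖} :=
    fun q hq => h q hq l hl
  have hsub2 : (A.topologicalClosure : Set (H × H)) ⊆
      {q : H × H | ‖(l : 𝕜) • q.1‖ ≤ ‖(l : 𝕜) • q.1 - q.2‖} := by
    rw [Submodule.topologicalClosure_coe]; exact closure_minimal hsub hS
  exact hsub2 hp

end aux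

/-- On a Hilbert space, a relation is m-dissipative (dissipative with `ran(l - A) = H`
for some `l > 0`) iff it is maximal dissipative (dissipative with no proper dissipative
extension). -/
theorem stmt_14 {𝕜 H : Type*} [RCLike 𝕜] [NormedAddCommGroup H] [InnerProductSpace 𝕜 H]
    [CompleteSpace H] (A : Submodule 𝕜 (H × H)) :
    (Dissipative A ∧ ∃ l : ℝ, 0 < l ∧ ∀ v : H, ∃ p ∈ A, v = (l : 𝕜) • p.1 - p.2) ↔
      (Dissipative A ∧ ∀ B : Submodule 𝕜 (H × H), Dissipative B → A ≤ B → A = B) := by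
  constructor
  · rintro ⟨hd, l, hl, hsurj⟩
    refine ⟨hd, fun B hB hAB => le_antisymm hAB ?_⟩
    rintro ⟨x, y⟩ hxy
    obtain ⟨p, hpA, hp⟩ := hsurj ((l : 𝕜) • x - y)
    have hq : ((x, y) - p) ∈ B := B.sub_mem hxy (hAB hpA)
    have hdq := hB _ hq l hl
    have hz : (l : 𝕜) • ((x, y) - p).1 - ((x, y) - p).2 = 0 := by
      simp only [Prod.fst_sub, Prod.snd_sub, smul_sub]
      rw [sub_sub_sub_comm, ← hp, sub_self]
    rw [hz, norm_zero] at hdq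
    have hx1 : (l : 𝕜) • (x - p.1) = 0 := by
      have := le_antisymm hdq (norm_nonneg _)
      simpa [norm_eq_zero] using this
    have hl0 : (l : 𝕜) ≠ 0 := by
      simp only [ne_eq, RCLike.ofReal_eq_zero]
      exact ne_of_gt hl
    have hx : x = p.1 := by
      have := smul_eq_zero.mp hx1
      rcases this with h | h
      · exact absurd h hl0
      · exact sub_eq_zero.mp h
    have hy : y = p.2 := by
      rw [hx] at hp
      exact sub_right_inj.mp hp
    rw [hx, hy]
    exact hpA
  · rintro ⟨hd, hmax⟩
    refine ⟨hd, 1, one_pos, ?_⟩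
    -- A is closed
    have hAeq : A = A.topologicalClosure := hmax _ (diss_closure hd) A.le_topologicalClosure
    have hAclosed : IsClosed (A : Set (H × H)) := by
      rw [hAeq]; exact A.isClosed_topologicalClosure
    -- the range R = {x - y : (x,y) ∈ A}
    set f : (H × H) →ₗ[𝕜] H := LinearMap.fst 𝕜 H H - LinearMap.snd 𝕜 H H with hf
    have hfapp : ∀ q : H × H, f q = q.1 - q.2 := fun q => rfl
    set R : Submodule 𝕜 H := A.map f with hR
    -- contraction estimate
    have hcontr : ∀ q ∈ A, ‖q.1‖ ≤ ‖q.1 - q.2‖ := by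
      intro q hq
      have := hd q hq 1 one_pos
      simpa using this
    -- R is closed
    have hRclosed : IsClosed (R : Set H) := by
      rw [← closure_subset_iff_isClosed]
      intro v hv
      obtain ⟨u, hu, hulim⟩ := mem_closure_iff_seq_limit.mp hv
      choose p hpA hpu using hu
      have hCauchy : CauchySeq fun n => (p n).1 := by
        rw [Metric.cauchySeq_iff]
        intro ε hε
        obtain ⟨N, hN⟩ := Metric.cauchySeq_iff.mp hulim.cauchySeq ε hε
        refine ⟨N, fun m hm n hn => lt_of_le_of_lt ?_ (hN m hm n hn)⟩
        have hsub : (p m) - (p n) ∈ A := A.sub_mem (hpA m) (hpA n)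
        have := hcontr _ hsub
        simp only [Prod.fst_sub, Prod.snd_sub] at this
        rw [dist_eq_norm, dist_eq_norm]
        calc ‖(p m).1 - (p n).1‖ ≤ ‖((p m).1 - (p n).1) - ((p m).2 - (p n).2)‖ := this
          _ = ‖u m - u n‖ := by rw [← hpu m, ← hpu n, hfapp, hfapp]; congr 1; abel
      obtain ⟨x, hx⟩ := cauchySeq_tendsto_of_complete hCauchy
      have hy : Tendsto (fun n => (p n).2) atTop (𝓝 (x - v)) := by
        have : ∀ n, (p n).2 = (p n).1 - u n := by
          intro n; rw [← hpu n, hfapp]; abel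
        simp_rw [this]
        exact hx.sub hulim
      have hpl : Tendsto p atTop (𝓝 (x, x - v)) := by
        rw [Prod.tendsto_iff]
        exact ⟨hx, hy⟩
      have hmem : (x, x - v) ∈ A := hAclosed.mem_of_tendsto hpl (Eventually.of_forall hpA)
      exact ⟨(x, x - v), hmem, by rw [hfapp]; exact sub_sub_cancel x v⟩
    haveI : CompleteSpace R := hRclosed.completeSpace_coe
    -- R = ⊤ via orthogonal complement
    have hRtop : R = ⊤ := by
      rw [← Submodule.orthogonal_eq_bot_iff]
      rw [Submodule.eq_bot_iff]
      intro z hz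
      by_contra hz0
      -- build the extension B
      set B : Submodule 𝕜 (H × H) := A ⊔ Submodule.span 𝕜 {((z, -z) : H × H)} with hB
      have hzB : ((z, -z) : H × H) ∈ B :=
        (le_sup_right : _ ≤ B) (Submodule.mem_span_singleton_self _)
      have hBd : Dissipative B := by
        rw [diss_iff]
        rintro q hq
        rw [hB, Submodule.mem_sup] at hq
        obtain ⟨a, ha, b, hb, rfl⟩ := hq
        obtain ⟨c, rfl⟩ := Submodule.mem_span_singleton.mp hb
        have horth : @inner 𝕜 _ _ (a.1 - a.2) z = 0 := by
          apply (Submodule.mem_orthogonal R z).mp hz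
          exact ⟨a, ha, rfl⟩
        have hinner : @inner 𝕜 _ _ a.1 z = @inner 𝕜 _ _ a.2 z := by
          have := horth
          rw [inner_sub_left, sub_eq_zero] at this
          exact this
        have haA : re (@inner 𝕜 _ _ a.1 a.2) ≤ 0 := (diss_iff A).mp hd a ha
        have hfst : (a + c • (z, -z)).1 = a.1 + c • z := rfl
        have hsnd : (a + c • (z, -z)).2 = a.2 - c • z := by
          show a.2 + c • (-z) = a.2 - c • z
          rw [smul_neg]; abel
        rw [hfst, hsnd]
        have expand : @inner 𝕜 _ _ (a.1 + c • z) (a.2 - c • z)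
            = @inner 𝕜 _ _ a.1 a.2 - c * @inner 𝕜 _ _ a.1 z
              + (starRingEnd 𝕜) c * @inner 𝕜 _ _ z a.2 - (starRingEnd 𝕜) c * c * @inner 𝕜 _ _ z z := by
          rw [inner_add_left, inner_sub_right, inner_sub_right, inner_smul_left,
            inner_smul_right, inner_smul_right, inner_smul_left]
          ring
        rw [expand, hinner]
        have hconj : (starRingEnd 𝕜) c * @inner 𝕜 _ _ z a.2
            = (starRingEnd 𝕜) (c * @inner 𝕜 _ _ a.2 z) := by
          rw [map_mul, ← inner_conj_symm]
        rw [hconj]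
        simp only [map_sub, map_add, conj_re]
        have h1 : re ((starRingEnd 𝕜) c * c * @inner 𝕜 _ _ z z) = ‖c • z‖ ^ 2 := by
          have : (starRingEnd 𝕜) c * c * @inner 𝕜 _ _ z z = @inner 𝕜 _ _ (c • z) (c • z) := by
            rw [inner_smul_left, inner_smul_right]; ring
          rw [this, inner_self_eq_norm_sq]
        rw [h1]
        nlinarith [sq_nonneg ‖c • z‖]
      have hAB : A = B := hmax B hBd le_sup_left
      have hzA : ((z, -z) : H × H) ∈ A := by rw [hAB]; exact hzB
      have h2z : z + z ∈ R := ⟨(z, -z), hzA, by rw [hfapp]; exact sub_neg_eq_add z z⟩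
      have := (Submodule.mem_orthogonal R z).mp hz _ h2z
      rw [inner_add_left] at this
      have : @inner 𝕜 _ _ z z = 0 := by
        have h2 : (2 : 𝕜) * @inner 𝕜 _ _ z z = 0 := by rw [two_mul]; exact this
        exact (mul_eq_zero.mp h2).resolve_left two_ne_zero
      exact hz0 (inner_self_eq_zero.mp this)
    intro v
    have hv : v ∈ R := hRtop ▸ Submodule.mem_top
    obtain ⟨p, hpA, hp⟩ := hv
    refine ⟨p, hpA, ?_⟩
    rw [hfapp] at hp
    rw [← hp]
    simp
end

section
/- Let H be a Hilbert space and let A ⊆ H × H be a maximal dissipative operator, i.e. A is a dissipative relation with mul A = {0}, and whenever B ⊆ H × H is a dissipative relation with mul B = {0} and A ⊆ B, then A = B. Then the closure of A in H × H is an m-dissipative relation. -/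
open Filter Topology

section Aux

open RCLike ComplexConjugate

variable {𝕜 H : Type*} [RCLike 𝕜] [NormedAddCommGroup H] [InnerProductSpace 𝕜 H]

local notation "⟪" x ", " y "⟫" => @inner 𝕜 _ _ x y

theorem aux_dissip_of_re {A : Submodule 𝕜 (H × H)} (h : ∀ p ∈ A, re ⟪p.1, p.2⟫ ≤ 0) :
    Dissipative A := by
  intro p hp l hl
  have hre := h p hp
  have h2 : ‖(l : 𝕜) • p.1‖^2 ≤ ‖(l : 𝕜) • p.1 - p.2‖^2 := by
    rw [norm_sub_sq (𝕜 := 𝕜) ((l:𝕜) • p.1) p.2, inner_smul_left]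
    have : re (conj (l:𝕜) * ⟪p.1, p.2⟫) = l * re ⟪p.1, p.2⟫ := by
      simp [RCLike.conj_ofReal]
    rw [this]
    nlinarith [sq_nonneg ‖p.2‖]
  nlinarith [norm_nonneg ((l : 𝕜) • p.1), norm_nonneg ((l : 𝕜) • p.1 - p.2)]

theorem aux_re_of_dissip {A : Submodule 𝕜 (H × H)} (h : Dissipative A) :
    ∀ p ∈ A, re ⟪p.1, p.2⟫ ≤ 0 := by
  intro p hp
  by_contra hc
  push_neg at hc
  have key : ∀ l : ℝ, 0 < l → 2 * (l * re ⟪p.1, p.2⟫) ≤ ‖p.2‖^2 := by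
    intro l hl
    have h1 := h p hp l hl
    have h2 : ‖(l : 𝕜) • p.1‖^2 ≤ ‖(l : 𝕜) • p.1 - p.2‖^2 := by
      nlinarith [norm_nonneg ((l : 𝕜) • p.1)]
    rw [norm_sub_sq (𝕜 := 𝕜) ((l:𝕜) • p.1) p.2, inner_smul_left] at h2
    have : re (conj (l:𝕜) * ⟪p.1, p.2⟫) = l * re ⟪p.1, p.2⟫ := by
      simp [RCLike.conj_ofReal]
    rw [this] at h2; linarith
  set c := re ⟪p.1, p.2⟫ with hcdef
  have hl : (0:ℝ) < (‖p.2‖^2 + 1) / (2 * c) := by positivity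
  have hk := key _ hl
  have hne : (2*c) ≠ 0 := by positivity
  have h3 : 2 * ((‖p.2‖^2 + 1)/(2*c) * c) = (‖p.2‖^2 + 1)/(2*c) * (2*c) := by ring
  rw [h3, div_mul_cancel₀ _ hne] at hk
  linarith

variable [CompleteSpace H]

theorem aux_closed_range (C : Submodule 𝕜 (H × H)) (hcl : IsClosed (C : Set (H × H)))
    (hd : ∀ p ∈ C, ‖p.1‖ ≤ ‖p.1 - p.2‖) :
    IsClosed ((C.map ((LinearMap.fst 𝕜 H H) - (LinearMap.snd 𝕜 H H))) : Set H) := by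
  haveI : CompleteSpace C := hcl.completeSpace_coe
  set f : (H × H) →L[𝕜] H := ContinuousLinearMap.fst 𝕜 H H - ContinuousLinearMap.snd 𝕜 H H with hf
  set g : C →L[𝕜] H := f.comp C.subtypeL with hg
  have hrange : Set.range g =
      ((C.map ((LinearMap.fst 𝕜 H H) - (LinearMap.snd 𝕜 H H))) : Set H) := by
    ext v
    simp [Submodule.mem_map, hg, hf]
  have hanti : AntilipschitzWith 2 g := by
    apply AntilipschitzWith.of_le_mul_dist
    intro q q'
    rw [dist_eq_norm, dist_eq_norm, ← map_sub]
    set r := (q : H × H) - (q' : H × H) with hr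
    have hrC : r ∈ C := C.sub_mem q.2 q'.2
    have h1 : ‖r.1‖ ≤ ‖r.1 - r.2‖ := hd r hrC
    have h2 : ‖r.2‖ ≤ 2 * ‖r.1 - r.2‖ := by
      have h3 : ‖r.2‖ ≤ ‖r.1‖ + ‖r.1 - r.2‖ := by
        calc ‖r.2‖ = ‖r.1 - (r.1 - r.2)‖ := by rw [sub_sub_cancel]
          _ ≤ ‖r.1‖ + ‖r.1 - r.2‖ := norm_sub_le _ _
      linarith
    have hgr : g (q - q') = r.1 - r.2 := by simp [hg, hf, hr]
    rw [hgr]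
    have hqq : ‖q - q'‖ = max ‖r.1‖ ‖r.2‖ := by
      have : ((q - q' : C) : H × H) = r := by simp [hr]
      rw [show ‖q - q'‖ = ‖((q - q' : C) : H × H)‖ from rfl, this, Prod.norm_def]
    rw [hqq, show ((2:NNReal):ℝ) = 2 by norm_num]
    rcases max_cases ‖r.1‖ ‖r.2‖ with ⟨he, _⟩ | ⟨he, _⟩ <;> rw [he] <;>
      [linarith [h1, norm_nonneg (r.1 - r.2)]; linarith [h2]]
  exact hrange ▸ hanti.isClosed_range g.uniformContinuous

end Aux

/-- If `A` is a maximal dissipative operator on a Hilbert space `H` (a dissipative relation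
with `mul A = {0}` which has no proper extension among dissipative operators), then the
closure of `A` in `H × H` is an m-dissipative relation. -/
theorem stmt_15 {𝕜 H : Type*} [RCLike 𝕜] [NormedAddCommGroup H] [InnerProductSpace 𝕜 H]
    [CompleteSpace H] (A : Submodule 𝕜 (H × H))
    (hdiss : Dissipative A)
    (hop : ∀ y : H, ((0 : H), y) ∈ A → y = 0)
    (hmax : ∀ B : Submodule 𝕜 (H × H),
        Dissipative B → (∀ y : H, ((0 : H), y) ∈ B → y = 0) → A ≤ B → A = B) :
    Dissipative A.topologicalClosure ∧
      ∃ l : ℝ, 0 < l ∧ ∀ v : H, ∃ p ∈ A.topologicalClosure, v = (l : 𝕜) • p.1 - p.2 := by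
  classical
  open RCLike ComplexConjugate in
  have hreA : ∀ p ∈ A, re (inner 𝕜 p.1 p.2 : 𝕜) ≤ 0 := aux_re_of_dissip hdiss
  have hreC : ∀ p ∈ A.topologicalClosure, RCLike.re (inner 𝕜 p.1 p.2 : 𝕜) ≤ 0 := by
    have hc : IsClosed {p : H × H | RCLike.re (inner 𝕜 p.1 p.2 : 𝕜) ≤ 0} := by
      apply isClosed_le _ continuous_const
      exact RCLike.continuous_re.comp ((continuous_fst.inner continuous_snd))
    intro p hp
    have hsub : (A.topologicalClosure : Set (H × H)) ⊆
        {p : H × H | RCLike.re (inner 𝕜 p.1 p.2 : 𝕜) ≤ 0} := by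
      rw [Submodule.topologicalClosure_coe]
      exact closure_minimal (fun q hq => hreA q hq) hc
    exact hsub hp
  have hdissC : Dissipative A.topologicalClosure := aux_dissip_of_re hreC
  refine ⟨hdissC, 1, one_pos, ?_⟩
  set fL : (H × H) →ₗ[𝕜] H := (LinearMap.fst 𝕜 H H) - (LinearMap.snd 𝕜 H H) with hfL
  set K : Submodule 𝕜 H := A.topologicalClosure.map fL with hK
  have hd1 : ∀ p ∈ A.topologicalClosure, ‖p.1‖ ≤ ‖p.1 - p.2‖ := by
    intro p hp
    have := hdissC p hp 1 one_pos
    simpa using this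
  have hKcl : IsClosed (K : Set H) :=
    aux_closed_range A.topologicalClosure A.isClosed_topologicalClosure hd1
  haveI : CompleteSpace K := hKcl.completeSpace_coe
  have horth : ∀ z : H, z ∈ Kᗮ → ∀ p ∈ A.topologicalClosure,
      (inner 𝕜 (p.1 - p.2) z : 𝕜) = 0 := by
    intro z hz p hp
    exact (Submodule.mem_orthogonal K z).mp hz _
      (Submodule.mem_map.mpr ⟨p, hp, by simp [hfL]⟩)
  have hKtop : K = ⊤ := by
    by_contra hKne
    have hbot : Kᗮ ≠ ⊥ := by
      rw [ne_eq, Submodule.orthogonal_eq_bot_iff]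
      exact hKne
    obtain ⟨z, hzK, hz0⟩ := Submodule.ne_bot_iff _ |>.mp hbot
    have hzpos : (0:ℝ) < ‖z‖ := norm_pos_iff.mpr hz0
    set B : Submodule 𝕜 (H × H) := A ⊔ Submodule.span 𝕜 {((z, -z) : H × H)} with hB
    have hmem : ∀ p ∈ B, ∃ a ∈ A, ∃ c : 𝕜, p = a + c • ((z, -z) : H × H) := by
      intro p hp
      rw [hB, Submodule.mem_sup] at hp
      obtain ⟨a, ha, b, hb, hab⟩ := hp
      rw [Submodule.mem_span_singleton] at hb
      obtain ⟨c, rfl⟩ := hb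
      exact ⟨a, ha, c, hab.symm⟩
    -- orthogonality for elements of A
    have hxz : ∀ a ∈ A, (inner 𝕜 a.1 z : 𝕜) = inner 𝕜 a.2 z := by
      intro a ha
      have := horth z hzK a (A.le_topologicalClosure ha)
      rw [inner_sub_left, sub_eq_zero] at this
      exact this
    have hBdiss : Dissipative B := by
      apply aux_dissip_of_re
      intro p hp
      obtain ⟨a, ha, c, rfl⟩ := hmem p hp
      have hp1 : (a + c • ((z, -z) : H × H)).1 = a.1 + c • z := rfl
      have hp2 : (a + c • ((z, -z) : H × H)).2 = a.2 - c • z := by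
        show a.2 + c • (-z) = a.2 - c • z
        rw [smul_neg, ← sub_eq_add_neg]
      rw [hp1, hp2]
      have expand : (inner 𝕜 (a.1 + c • z) (a.2 - c • z) : 𝕜) =
          inner 𝕜 a.1 a.2 - c * inner 𝕜 a.1 z + conj c * (inner 𝕜 z a.2 : 𝕜)
            - conj c * c * inner 𝕜 z z := by
        simp only [inner_add_left, inner_sub_right, inner_smul_left, inner_smul_right]
        ring
      have hz2 : (inner 𝕜 z a.2 : 𝕜) = conj (inner 𝕜 a.1 z : 𝕜) := by
        rw [← inner_conj_symm, hxz a ha]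
      have hcc : conj c * c * (inner 𝕜 z z : 𝕜) = ((‖c‖^2 * ‖z‖^2 : ℝ) : 𝕜) := by
        rw [RCLike.conj_mul, inner_self_eq_norm_sq_to_K]
        push_cast
        ring
      have hconj : conj c * conj (inner 𝕜 a.1 z : 𝕜) = conj (c * inner 𝕜 a.1 z) := by
        rw [map_mul]
      rw [expand, hz2, hconj, hcc]
      have hre : RCLike.re ((inner 𝕜 a.1 a.2 : 𝕜) - c * inner 𝕜 a.1 z
          + conj (c * (inner 𝕜 a.1 z : 𝕜)) - ((‖c‖^2 * ‖z‖^2 : ℝ) : 𝕜))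
          = RCLike.re (inner 𝕜 a.1 a.2 : 𝕜) - ‖c‖^2 * ‖z‖^2 := by
        rw [map_sub, map_add, map_sub, RCLike.conj_re, RCLike.ofReal_re]
        ring
      rw [hre]
      have := hreA a ha
      nlinarith [sq_nonneg ‖c‖, sq_nonneg ‖z‖, sq_nonneg (‖c‖ * ‖z‖)]
    have hBop : ∀ y : H, ((0 : H), y) ∈ B → y = 0 := by
      intro y hy
      obtain ⟨a, ha, c, hpe⟩ := hmem _ hy
      have h1 : (0 : H) = a.1 + c • z := congrArg Prod.fst hpe
      have h2 : y = a.2 + c • (-z) := congrArg Prod.snd hpe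
      have ha1 : a.1 = -(c • z) := eq_neg_of_add_eq_zero_left h1.symm
      -- compute inner 𝕜 a.1 a.2
      have hxz' := hxz a ha
      have hiz : (inner 𝕜 a.1 z : 𝕜) = -(conj c * ((‖z‖^2 : ℝ) : 𝕜)) := by
        rw [ha1, inner_neg_left, inner_smul_left, inner_self_eq_norm_sq_to_K]
        push_cast
        ring
      have hia : (inner 𝕜 a.1 a.2 : 𝕜) = ((‖c‖^2 * ‖z‖^2 : ℝ) : 𝕜) := by
        have hz2 : (inner 𝕜 z a.2 : 𝕜) = conj (inner 𝕜 a.1 z : 𝕜) := by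
          rw [← inner_conj_symm, hxz']
        rw [ha1, inner_neg_left, inner_smul_left, hz2, hiz]
        rw [map_neg, map_mul, RCLike.conj_conj, RCLike.conj_ofReal]
        have hcm : -((starRingEnd 𝕜) c * -(c * ((‖z‖^2 : ℝ) : 𝕜)))
            = ((starRingEnd 𝕜) c * c) * ((‖z‖^2 : ℝ) : 𝕜) := by ring
        rw [hcm, RCLike.conj_mul]
        push_cast
        ring
      have hre := hreA a ha
      rw [hia, RCLike.ofReal_re] at hre
      have hc0 : c = 0 := by
        by_contra hcne
        have hcpos : (0:ℝ) < ‖c‖ := norm_pos_iff.mpr hcne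
        have : (0:ℝ) < ‖c‖^2 * ‖z‖^2 := by positivity
        linarith
      rw [hc0, zero_smul, neg_zero] at ha1
      rw [hc0, zero_smul, add_zero] at h2
      have ha' : ((0 : H), a.2) ∈ A := by
        have : a = ((0 : H), a.2) := by
          rw [Prod.ext_iff]
          exact ⟨ha1, rfl⟩
        rwa [this] at ha
      rw [h2]
      exact hop a.2 ha'
    have hAB := hmax B hBdiss hBop le_sup_left
    have hzB : ((z, -z) : H × H) ∈ B :=
      (le_sup_right : Submodule.span 𝕜 {((z, -z) : H × H)} ≤ B)
        (Submodule.mem_span_singleton_self _)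
    rw [← hAB] at hzB
    have hz2 : (inner 𝕜 (z - -z) z : 𝕜) = 0 :=
      horth z hzK (z, -z) (A.le_topologicalClosure hzB)
    rw [sub_neg_eq_add, inner_add_left, ← two_mul] at hz2
    rcases mul_eq_zero.mp hz2 with h | h
    · exact absurd h two_ne_zero
    · exact hz0 (inner_self_eq_zero.mp h)
  intro v
  have hv : v ∈ K := hKtop ▸ Submodule.mem_top
  obtain ⟨p, hp, hfp⟩ := Submodule.mem_map.mp hv
  refine ⟨p, hp, ?_⟩
  have : fL p = p.1 - p.2 := by simp [hfL]
  rw [show ((1:ℝ):𝕜) = 1 from RCLike.ofReal_one, one_smul]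
  rw [this] at hfp
  exact hfp.symm
end
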